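/- There exist universal constants C ≥ 1 and θ > 0 such that for every real number ρ ≥ 1 and all differentiable functions u, v : [0, ∞) → ℝ satisfying u'(t) = −ρ·v(t) and v'(t) = ρ·u(t) − v(t) for all t ≥ 0, one has u(t)² + v(t)² ≤ C·e^{−θ t}·(u(0)² + v(0)²) for all t ≥ 0. (A suitable Lyapunov functional is L(t) = u(t)² + v(t)² − (1/(2ρ))·u(t)·v(t).) -/

import Mathlib

/-- Hypocoercivity: there are universal constants `C ≥ 1` and `θ > 0` such that for every
`ρ ≥ 1` and all differentiable `u, v : [0,∞) → ℝ` with `u' = -ρ v` and `v' = ρ u - v`,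
one has `u(t)² + v(t)² ≤ C e^{-θ t} (u(0)² + v(0)²)` for all `t ≥ 0`. -/
theorem stmt8 :
    ∃ C : ℝ, 1 ≤ C ∧ ∃ θ : ℝ, 0 < θ ∧
      ∀ ρ : ℝ, 1 ≤ ρ → ∀ u v : ℝ → ℝ,
        (∀ t : ℝ, 0 ≤ t → HasDerivAt u (-(ρ * v t)) t) →
        (∀ t : ℝ, 0 ≤ t → HasDerivAt v (ρ * u t - v t) t) →
        ∀ t : ℝ, 0 ≤ t →
          u t ^ 2 + v t ^ 2 ≤ C * Real.exp (-θ * t) * (u 0 ^ 2 + v 0 ^ 2) := by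
  refine ⟨5/3, by norm_num, 1/5, by norm_num, ?_⟩
  intro ρ hρ u v hu hv t ht
  have hρ0 : (0:ℝ) < ρ := lt_of_lt_of_le one_pos hρ
  set c : ℝ := 1/(2*ρ) with hcdef
  have hc0 : 0 < c := by positivity
  have hc2 : c ≤ 1/2 := by
    rw [hcdef, div_le_div_iff₀ (by positivity) (by norm_num)]
    linarith
  have hcρ : c * ρ = 1/2 := by
    rw [hcdef]; field_simp
  clear_value c
  set L : ℝ → ℝ := fun s => u s ^ 2 + v s ^ 2 - c * (u s * v s) with hLdef
  set g : ℝ → ℝ := fun s => Real.exp ((1/5) * s) * L s with hgdef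
  have hLd : ∀ s : ℝ, 0 ≤ s →
      HasDerivAt L (-(1/2) * u s ^ 2 - (3/2) * v s ^ 2 + c * (u s * v s)) s := by
    intro s hs
    have h1 := (((hu s hs).pow 2).add ((hv s hs).pow 2)).sub
      (((hu s hs).mul (hv s hs)).const_mul c)
    refine h1.congr_deriv ?_
    have hc' : c * ρ = 1/2 := hcρ
    norm_num
    linear_combination (-(u s ^ 2 - v s ^ 2)) * hc'
  have hgd : ∀ s : ℝ, 0 ≤ s →
      HasDerivAt g (Real.exp ((1/5) * s) *
        ((1/5) * L s + (-(1/2) * u s ^ 2 - (3/2) * v s ^ 2 + c * (u s * v s)))) s := by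
    intro s hs
    have he : HasDerivAt (fun x : ℝ => Real.exp ((1/5) * x))
        (Real.exp ((1/5) * s) * (1/5)) s := by
      exact ((Real.hasDerivAt_exp ((1/5)*s)).comp s
        ((hasDerivAt_id s).const_mul (1/5))).congr_deriv (by ring)
    have := he.mul (hLd s hs)
    refine this.congr_deriv ?_
    ring
  have anti : AntitoneOn g (Set.Ici (0:ℝ)) := by
    apply antitoneOn_of_deriv_nonpos (convex_Ici 0)
    · intro s hs
      exact (hgd s hs).continuousAt.continuousWithinAt
    · intro s hs
      rw [interior_Ici] at hs
      exact ((hgd s (le_of_lt hs)).differentiableAt).differentiableWithinAt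
    · intro s hs
      rw [interior_Ici] at hs
      rw [(hgd s (le_of_lt hs)).deriv]
      apply mul_nonpos_of_nonneg_of_nonpos (Real.exp_nonneg _)
      have h1 : 0 ≤ (1/2 - c) * (u s - v s)^2 := by nlinarith [sq_nonneg (u s - v s)]
      have h2 : 0 ≤ c * (u s + v s)^2 := by positivity
      simp only [hLdef]
      nlinarith [sq_nonneg (u s - v s), sq_nonneg (u s + v s), sq_nonneg (u s), sq_nonneg (v s)]
  have hgt : g t ≤ g 0 := anti Set.self_mem_Ici ht ht
  have hLt : Real.exp ((1/5) * t) * L t ≤ L 0 := by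
    simpa [hgdef] using hgt
  have hexp : 0 < Real.exp (-(1/5 : ℝ) * t) := Real.exp_pos _
  have hexp' : Real.exp (-(1/5 : ℝ) * t) * Real.exp ((1/5 : ℝ) * t) = 1 := by
    rw [← Real.exp_add]; norm_num
  have h2 : L t ≤ Real.exp (-(1/5 : ℝ) * t) * L 0 := by
    have := mul_le_mul_of_nonneg_left hLt hexp.le
    calc L t = Real.exp (-(1/5:ℝ) * t) * Real.exp ((1/5:ℝ) * t) * L t := by
          rw [hexp']; ring
      _ ≤ Real.exp (-(1/5:ℝ) * t) * L 0 := by rw [mul_assoc]; exact this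
  have h1 : u t ^ 2 + v t ^ 2 ≤ (4/3) * L t := by
    simp only [hLdef]
    nlinarith [sq_nonneg (u t - v t), sq_nonneg (u t + v t)]
  have h3 : L 0 ≤ (5/4) * (u 0 ^ 2 + v 0 ^ 2) := by
    simp only [hLdef]
    nlinarith [sq_nonneg (u 0 - v 0), sq_nonneg (u 0 + v 0)]
  have h4 : Real.exp (-(1/5:ℝ) * t) * L 0 ≤
      Real.exp (-(1/5:ℝ) * t) * ((5/4) * (u 0 ^ 2 + v 0 ^ 2)) :=
    mul_le_mul_of_nonneg_left h3 hexp.le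
  calc u t ^ 2 + v t ^ 2 ≤ (4/3) * L t := h1
    _ ≤ (4/3) * (Real.exp (-(1/5:ℝ) * t) * L 0) := by linarith [mul_le_mul_of_nonneg_left h2 (by norm_num : (0:ℝ) ≤ 4/3)]
    _ ≤ (4/3) * (Real.exp (-(1/5:ℝ) * t) * ((5/4) * (u 0 ^ 2 + v 0 ^ 2))) := by
        linarith [mul_le_mul_of_nonneg_left h4 (by norm_num : (0:ℝ) ≤ 4/3)]
    _ = 5/3 * Real.exp (-(1/5:ℝ) * t) * (u 0 ^ 2 + v 0 ^ 2) := by ring
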